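/- arXiv:1006.0077 — 3 statements merged into one kernel-verified Lean document; each statement's English description precedes it below -/
import Mathlib

section
/- Every operator in the commutant of S₁ (multiplication by z on the Tate algebra H(𝔸_p)) is a limit in the uniform operator topology of polynomials in S₁. -/
open Filter Topology ZeroAtInfty Finset

/-- The unilateral shift as a bounded linear operator on `c₀`; under the coefficient
isomorphism of the Tate algebra `H(𝔸_p)` with `c₀` it is the operator `S₁` of
multiplication by `z`. -/
noncomputable def shiftCLM (K : Type*) [NontriviallyNormedField K] :
    C₀(ℕ, K) →L[K] C₀(ℕ, K) :=
  LinearMap.mkContinuous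
    { toFun := fun x =>
        { toFun := fun n => Nat.rec 0 (fun m _ => x m) n
          continuous_toFun := continuous_of_discreteTopology
          zero_at_infty' := by
            rw [cocompact_eq_atTop (α := ℕ)]
            refine (tendsto_add_atTop_iff_nat 1).mp ?_
            have h := x.zero_at_infty'
            rw [cocompact_eq_atTop (α := ℕ)] at h
            exact h }
      map_add' := by
        intro x y; ext n; cases n <;>
          simp [ZeroAtInftyContinuousMap.add_apply]
      map_smul' := by
        intro c x; ext n; cases n <;>
          simp [ZeroAtInftyContinuousMap.smul_apply] }
    1 (by
      intro x
      rw [one_mul, ← ZeroAtInftyContinuousMap.norm_toBCF_eq_norm,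
        ← ZeroAtInftyContinuousMap.norm_toBCF_eq_norm]
      refine (BoundedContinuousFunction.norm_le (norm_nonneg _)).mpr fun n => ?_
      cases n with
      | zero => simp
      | succ m => exact BoundedContinuousFunction.norm_coe_le_norm x.toBCF m)

noncomputable section Aux

variable {K : Type*} [NontriviallyNormedField K]

/-- indicator basis vector -/
def eC0 (K : Type*) [NontriviallyNormedField K] (n : ℕ) : C₀(ℕ, K) where
  toFun := fun m => if m = n then 1 else 0
  continuous_toFun := continuous_of_discreteTopology
  zero_at_infty' := by
    rw [cocompact_eq_atTop (α := ℕ)]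
    refine tendsto_nhds_of_eventually_eq ?_
    filter_upwards [eventually_gt_atTop n] with m hm
    simp [Nat.ne_of_gt hm]

lemma eC0_apply (n m : ℕ) : eC0 K n m = if m = n then 1 else 0 := rfl

lemma c0_norm_coe_le (x : C₀(ℕ, K)) (k : ℕ) : ‖x k‖ ≤ ‖x‖ := by
  rw [← ZeroAtInftyContinuousMap.norm_toBCF_eq_norm]
  exact BoundedContinuousFunction.norm_coe_le_norm x.toBCF k

lemma c0_norm_le {x : C₀(ℕ, K)} {C : ℝ} (hC : 0 ≤ C) (h : ∀ k, ‖x k‖ ≤ C) : ‖x‖ ≤ C := by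
  rw [← ZeroAtInftyContinuousMap.norm_toBCF_eq_norm]
  exact (BoundedContinuousFunction.norm_le hC).mpr h

lemma c0_sum_apply {ι : Type*} (s : Finset ι) (f : ι → C₀(ℕ, K)) (k : ℕ) :
    (∑ i ∈ s, f i) k = ∑ i ∈ s, f i k :=
  map_sum ({ toFun := fun g => g k, map_zero' := rfl, map_add' := fun _ _ => rfl } :
    C₀(ℕ, K) →+ K) f s

lemma shiftCLM_apply_zero (x : C₀(ℕ, K)) : (shiftCLM K x) 0 = 0 := rfl

lemma shiftCLM_apply_succ (x : C₀(ℕ, K)) (m : ℕ) : (shiftCLM K x) (m + 1) = x m := rfl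

lemma shiftCLM_norm_apply_le (x : C₀(ℕ, K)) : ‖shiftCLM K x‖ ≤ ‖x‖ := by
  refine c0_norm_le (norm_nonneg _) fun k => ?_
  cases k with
  | zero => simp [shiftCLM_apply_zero]
  | succ m => rw [shiftCLM_apply_succ]; exact c0_norm_coe_le x m

lemma shiftCLM_pow_norm_apply_le (n : ℕ) (x : C₀(ℕ, K)) : ‖(shiftCLM K ^ n) x‖ ≤ ‖x‖ := by
  induction n with
  | zero => simp
  | succ m ih =>
      rw [pow_succ']
      calc ‖shiftCLM K ((shiftCLM K ^ m) x)‖ ≤ ‖(shiftCLM K ^ m) x‖ :=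
            shiftCLM_norm_apply_le _
        _ ≤ ‖x‖ := ih

lemma shiftCLM_eC0 (n : ℕ) : shiftCLM K (eC0 K n) = eC0 K (n + 1) := by
  ext k
  cases k with
  | zero => simp [shiftCLM_apply_zero, eC0_apply]
  | succ m => simp [shiftCLM_apply_succ, eC0_apply]

lemma shiftCLM_pow_eC0 (n : ℕ) : (shiftCLM K ^ n) (eC0 K 0) = eC0 K n := by
  induction n with
  | zero => simp
  | succ m ih => rw [pow_succ']; simp [ih, shiftCLM_eC0]

/-- any operator commuting with the shift sends `e n` to `Sⁿ (B e₀)` -/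
lemma commute_apply_eC0 (B : C₀(ℕ, K) →L[K] C₀(ℕ, K))
    (h : B ∘L shiftCLM K = shiftCLM K ∘L B) (n : ℕ) :
    B (eC0 K n) = (shiftCLM K ^ n) (B (eC0 K 0)) := by
  induction n with
  | zero => simp
  | succ m ih =>
      rw [← shiftCLM_eC0, ← ContinuousLinearMap.comp_apply, h,
        ContinuousLinearMap.comp_apply, ih, pow_succ']
      rfl

/-- truncations converge to `x` in `c₀` -/
lemma tendsto_trunc (x : C₀(ℕ, K)) :
    Tendsto (fun M => ∑ n ∈ range M, x n • eC0 K n) atTop (𝓝 x) := by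
  rw [Metric.tendsto_atTop]
  intro ε hε
  have hx := x.zero_at_infty'
  rw [cocompact_eq_atTop (α := ℕ), Metric.tendsto_atTop] at hx
  obtain ⟨N, hN⟩ := hx (ε / 2) (by linarith)
  refine ⟨N, fun M hM => ?_⟩
  rw [dist_eq_norm]
  have hb : ‖(∑ n ∈ range M, x n • eC0 K n) - x‖ ≤ ε / 2 := by
    refine c0_norm_le (by linarith) fun k => ?_
    have hco : ((∑ n ∈ range M, x n • eC0 K n) - x) k
        = (∑ n ∈ range M, x n * eC0 K n k) - x k := by
      simp [ZeroAtInftyContinuousMap.sub_apply, c0_sum_apply,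
        ZeroAtInftyContinuousMap.smul_apply, smul_eq_mul]
    rw [hco]
    by_cases hk : k < M
    · have : (∑ n ∈ range M, x n * eC0 K n k) = x k := by
        rw [Finset.sum_eq_single k]
        · simp [eC0_apply]
        · intro b _ hb; simp [eC0_apply, Ne.symm hb]
        · intro h; exact absurd (Finset.mem_range.mpr hk) h
      rw [this, sub_self, norm_zero]; linarith
    · have : (∑ n ∈ range M, x n * eC0 K n k) = 0 := by
        refine Finset.sum_eq_zero fun b hb => ?_
        have : b ≠ k := by
          intro h; exact hk (h ▸ Finset.mem_range.mp hb)
        simp [eC0_apply, Ne.symm this]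
      rw [this, zero_sub, norm_neg]
      have hkN : N ≤ k := le_trans hM (not_lt.mp hk)
      have := hN k hkN
      rw [dist_eq_norm, sub_zero] at this
      exact this.le
  linarith

end Aux

set_option maxHeartbeats 1000000 in
set_option synthInstance.maxHeartbeats 100000 in
theorem commutant_approx_by_polynomials_in_shift
    (p : ℕ) [Fact p.Prime] (K : Type*) [NontriviallyNormedField K]
    [IsAlgClosed K] [CompleteSpace K] [IsUltrametricDist K] [Algebra ℚ_[p] K]
    (hK : ∀ q : ℚ_[p], ‖algebraMap ℚ_[p] K q‖ = ‖q‖)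
    (A : C₀(ℕ, K) →L[K] C₀(ℕ, K))
    (hcomm : A ∘L shiftCLM K = shiftCLM K ∘L A) :
    ∀ ε : ℝ, 0 < ε → ∃ Q : Polynomial K,
      ‖A - Polynomial.aeval (shiftCLM K) Q‖ < ε := by
  intro ε hε
  set S := shiftCLM K with hS
  set a := A (eC0 K 0) with ha
  -- choose N with coefficients small beyond N
  have hat := a.zero_at_infty'
  rw [cocompact_eq_atTop (α := ℕ), Metric.tendsto_atTop] at hat
  obtain ⟨N, hN⟩ := hat (ε / 2) (by linarith)
  have hN' : ∀ k, N ≤ k → ‖a k‖ ≤ ε / 2 := fun k hk => by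
    have := hN k hk; rw [dist_eq_norm, sub_zero] at this; exact this.le
  refine ⟨∑ n ∈ range N, Polynomial.C (a n) * Polynomial.X ^ n, ?_⟩
  set Q : Polynomial K := ∑ n ∈ range N, Polynomial.C (a n) * Polynomial.X ^ n with hQ
  have hP : Polynomial.aeval S Q = ∑ n ∈ range N, a n • S ^ n := by
    rw [hQ, map_sum]
    refine Finset.sum_congr rfl fun n _ => ?_
    rw [map_mul, Polynomial.aeval_C, map_pow, Polynomial.aeval_X]
    exact (Algebra.smul_def _ _).symm
  set P : C₀(ℕ, K) →L[K] C₀(ℕ, K) := Polynomial.aeval S Q with hPdef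
  set B : C₀(ℕ, K) →L[K] C₀(ℕ, K) := A - P with hB
  -- B commutes with S
  have hPcomm : P ∘L S = S ∘L P := by
    rw [hP]
    ext1 y
    simp only [ContinuousLinearMap.comp_apply, ContinuousLinearMap.sum_apply, map_sum]
    refine Finset.sum_congr rfl fun n _ => ?_
    rw [ContinuousLinearMap.smul_apply, ContinuousLinearMap.smul_apply, map_smul]
    congr 1
    have : S ^ n * S = S * S ^ n := by
      rw [← pow_succ, ← pow_succ']
    calc (S ^ n) (S y) = (S ^ n * S) y := rfl
      _ = (S * S ^ n) y := by rw [this]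
      _ = S ((S ^ n) y) := rfl
  have hBcomm : B ∘L S = S ∘L B := by
    rw [hB, ContinuousLinearMap.sub_comp, ContinuousLinearMap.comp_sub, hcomm, hPcomm]
  -- norm of B e₀
  have hBe0 : ‖B (eC0 K 0)‖ ≤ ε / 2 := by
    refine c0_norm_le (by linarith) fun k => ?_
    have hPe0 : P (eC0 K 0) = ∑ n ∈ range N, a n • eC0 K n := by
      rw [hP]
      have : (∑ n ∈ range N, a n • S ^ n) (eC0 K 0)
          = ∑ n ∈ range N, a n • (S ^ n) (eC0 K 0) := by
        rw [ContinuousLinearMap.sum_apply]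
        exact Finset.sum_congr rfl fun n _ => rfl
      rw [this]
      exact Finset.sum_congr rfl fun n _ => by rw [hS, shiftCLM_pow_eC0]
    have hBk : (B (eC0 K 0)) k = a k - (∑ n ∈ range N, a n • eC0 K n) k := by
      rw [hB]; simp [hPe0, ZeroAtInftyContinuousMap.sub_apply, ha]
    rw [hBk, c0_sum_apply]
    by_cases hk : k < N
    · have : (∑ n ∈ range N, (a n • eC0 K n) k) = a k := by
        rw [Finset.sum_eq_single k]
        · simp [eC0_apply, ZeroAtInftyContinuousMap.smul_apply]
        · intro b _ hb
          simp [eC0_apply, ZeroAtInftyContinuousMap.smul_apply, Ne.symm hb]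
        · intro h; exact absurd (Finset.mem_range.mpr hk) h
      rw [this, sub_self, norm_zero]; linarith
    · have : (∑ n ∈ range N, (a n • eC0 K n) k) = 0 := by
        refine Finset.sum_eq_zero fun b hb => ?_
        have hbk : b ≠ k := fun h => hk (h ▸ Finset.mem_range.mp hb)
        simp [eC0_apply, ZeroAtInftyContinuousMap.smul_apply, Ne.symm hbk]
      rw [this, sub_zero]
      exact hN' k (not_lt.mp hk)
  have hBe : ∀ n, ‖B (eC0 K n)‖ ≤ ε / 2 := fun n => by
    rw [commute_apply_eC0 B hBcomm n]
    exact le_trans (shiftCLM_pow_norm_apply_le n _) hBe0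
  -- operator norm bound
  have hop : ‖B‖ ≤ ε / 2 := by
    refine ContinuousLinearMap.opNorm_le_bound B (by linarith) fun x => ?_
    have htr : Tendsto (fun M => B (∑ n ∈ range M, x n • eC0 K n)) atTop (𝓝 (B x)) :=
      (B.continuous.tendsto x).comp (tendsto_trunc x)
    refine le_of_tendsto htr.norm (Filter.Eventually.of_forall fun M => ?_)
    rw [map_sum]
    refine c0_norm_le (by positivity) fun k => ?_
    rw [c0_sum_apply]
    refine IsUltrametricDist.norm_sum_le_of_forall_le_of_nonneg (by positivity)
      fun n _ => ?_
    have hterm : (B (x n • eC0 K n)) k = x n * (B (eC0 K n)) k := by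
      rw [map_smul]; rfl
    calc ‖(B (x n • eC0 K n)) k‖ = ‖x n‖ * ‖(B (eC0 K n)) k‖ := by
          rw [hterm, norm_mul]
      _ ≤ ‖x‖ * (ε / 2) :=
          mul_le_mul (c0_norm_coe_le x n) ((c0_norm_coe_le _ k).trans (hBe n))
            (norm_nonneg _) (norm_nonneg _)
      _ = ε / 2 * ‖x‖ := mul_comm _ _
  calc ‖A - Polynomial.aeval (shiftCLM K) Q‖ = ‖B‖ := rfl
    _ ≤ ε / 2 := hop
    _ < ε := by linarith
end

section
/- For every λ ∈ ℂ_p with |λ|_p < 1, the function φ_λ(x) = (1+λ)^x (defined for x ∈ ℤ_p via the convergent binomial series Σ_{n≥0} λⁿ Pₙ(x)) is a continuous eigenfunction of the difference operator T₂ with eigenvalue λ: φ_λ(x+1) − φ_λ(x) = λ·φ_λ(x). Conversely, every eigenvalue of T₂ on C(ℤ_p,ℂ_p) satisfies |λ|_p < 1. -/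
open Filter Topology

/-- The `n`-th Mahler polynomial `Pₙ(x) = x(x-1)⋯(x-n+1)/n!`, viewed as a function
`ℤ_p → ℂ_p` (the field `K` plays the role of `ℂ_p`). -/
noncomputable def mahlerK (p : ℕ) [Fact p.Prime] (K : Type*) [NontriviallyNormedField K]
    [Algebra ℚ_[p] K] (n : ℕ) (x : ℤ_[p]) : K :=
  algebraMap ℚ_[p] K (mahler n x)

section aux

variable {p : ℕ} [Fact p.Prime] {K : Type*} [NontriviallyNormedField K] [Algebra ℚ_[p] K]

lemma mahler_norm_le_one (n : ℕ) (x : ℤ_[p]) : ‖mahler n x‖ ≤ 1 := by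
  rw [mahler_apply]
  exact PadicInt.norm_le_one _

lemma mahlerK_norm_le (hK : ∀ q : ℚ_[p], ‖algebraMap ℚ_[p] K q‖ = ‖q‖) (n : ℕ) (x : ℤ_[p]) :
    ‖mahlerK p K n x‖ ≤ 1 := by
  rw [mahlerK, hK]
  exact mahler_norm_le_one n x

lemma mahlerK_zero (x : ℤ_[p]) : mahlerK p K 0 x = 1 := by
  rw [mahlerK, mahler_apply, Ring.choose_zero_right]
  simp

lemma mahlerK_succ_diff (n : ℕ) (x : ℤ_[p]) :
    mahlerK p K (n + 1) (x + 1) - mahlerK p K (n + 1) x = mahlerK p K n x := by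
  simp only [mahlerK, ← map_sub]
  congr 1
  simp only [mahler_apply, Ring.choose_succ_succ x n]
  push_cast
  ring

lemma summable_mahler_series [CompleteSpace K] (hK : ∀ q : ℚ_[p], ‖algebraMap ℚ_[p] K q‖ = ‖q‖)
    {lam : K} (hl : ‖lam‖ < 1) (x : ℤ_[p]) :
    Summable fun n : ℕ => lam ^ n * mahlerK p K n x := by
  apply Summable.of_norm
  apply Summable.of_nonneg_of_le (fun _ => norm_nonneg _)
    (fun n => ?_) (summable_geometric_of_lt_one (norm_nonneg lam) hl)
  rw [norm_mul, norm_pow]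
  exact mul_le_of_le_one_right (by positivity) (mahlerK_norm_le hK n x)

/-- Key step: if `‖μ‖ ≤ 1` and `‖μ - 1‖ = 1` then `‖μ^p - 1‖ = 1`. -/
lemma norm_pow_prime_sub_one_eq {K : Type*} [NontriviallyNormedField K] [IsUltrametricDist K]
    {p : ℕ} (hp : p.Prime) (hpn : ‖(p : K)‖ < 1) {μ : K} (h1 : ‖μ - 1‖ = 1) :
    ‖μ ^ p - 1‖ = 1 := by
  have hkey := add_pow_prime_eq hp (μ - 1) 1
  rw [sub_add_cancel, one_pow] at hkey
  have hsub : μ ^ p - 1 = (μ - 1) ^ p + (p : K) *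
      ∑ k ∈ Finset.Ioo 0 p, (μ - 1) ^ k * 1 ^ (p - k) * ((p.choose k / p : ℕ) : K) := by
    have hs : ∑ k ∈ Finset.Ioo 0 p, (μ - 1) ^ k * 1 ^ (p - k) * ((p.choose k / p : ℕ) : K)
        = (μ - 1) * ∑ k ∈ Finset.Ioo 0 p,
          (μ - 1) ^ (k - 1) * 1 ^ (p - k - 1) * ((p.choose k / p : ℕ) : K) := by
      rw [Finset.mul_sum]
      apply Finset.sum_congr rfl
      intro k hk
      obtain ⟨j, rfl⟩ : ∃ j, k = j + 1 := ⟨k - 1, by simp at hk; omega⟩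
      simp only [one_pow, Nat.add_sub_cancel]
      ring
    rw [hkey, hs]; ring
  have hS : ‖(p : K) * ∑ k ∈ Finset.Ioo 0 p,
      (μ - 1) ^ k * 1 ^ (p - k) * ((p.choose k / p : ℕ) : K)‖ < 1 := by
    rw [norm_mul]
    calc ‖(p : K)‖ * ‖∑ k ∈ Finset.Ioo 0 p, (μ - 1) ^ k * 1 ^ (p - k) *
          ((p.choose k / p : ℕ) : K)‖
        ≤ ‖(p : K)‖ * 1 := by
          apply mul_le_mul_of_nonneg_left ?_ (norm_nonneg _)
          apply IsUltrametricDist.norm_sum_le_of_forall_le_of_nonneg zero_le_one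
          intro i _
          rw [norm_mul, norm_mul, norm_pow, norm_pow, h1, one_pow, norm_one, one_pow, one_mul,
            one_mul]
          exact IsUltrametricDist.norm_natCast_le_one K _
      _ < 1 := by rwa [mul_one]
  have hpow : ‖(μ - 1) ^ p‖ = 1 := by rw [norm_pow, h1, one_pow]
  have hS' : ‖(p : K) * ∑ k ∈ Finset.Ioo 0 p,
      (μ - 1) ^ k * 1 ^ (p - k) * ((p.choose k / p : ℕ) : K)‖ < ‖(μ - 1) ^ p‖ := by
    rw [hpow]; exact hS
  rw [hsub, IsUltrametricDist.norm_add_eq_max_of_norm_ne_norm hS'.ne', max_eq_left hS'.le, hpow]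

end aux

/-- For `λ ∈ ℂ_p` with `|λ| < 1`, the function
`φ_λ(x) = (1+λ)^x = ∑ λⁿ Pₙ(x)` is a continuous eigenfunction of the difference
operator `T₂φ(x) = φ(x+1) − φ(x)` with eigenvalue `λ`; conversely, every eigenvalue of
`T₂` on `C(ℤ_p, ℂ_p)` satisfies `|λ| < 1`. -/
theorem coherent_states_eigenfunctions
    (p : ℕ) [Fact p.Prime] (K : Type*) [NontriviallyNormedField K]
    [IsAlgClosed K] [CompleteSpace K] [IsUltrametricDist K] [Algebra ℚ_[p] K]
    (hK : ∀ q : ℚ_[p], ‖algebraMap ℚ_[p] K q‖ = ‖q‖) :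
    (∀ lam : K, ‖lam‖ < 1 →
      Continuous (fun x : ℤ_[p] => ∑' n : ℕ, lam ^ n * mahlerK p K n x) ∧
      ∀ x : ℤ_[p],
        (∑' n : ℕ, lam ^ n * mahlerK p K n (x + 1))
            - (∑' n : ℕ, lam ^ n * mahlerK p K n x)
          = lam * ∑' n : ℕ, lam ^ n * mahlerK p K n x) ∧
    (∀ lam : K, ∀ φ : C(ℤ_[p], K), φ ≠ 0 →
      (∀ x : ℤ_[p], φ (x + 1) - φ x = lam * φ x) → ‖lam‖ < 1) := by
  constructor
  · intro lam hl
    constructor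
    · apply continuous_tsum (u := fun n => ‖lam‖ ^ n)
      · intro n
        have hiso : Isometry (algebraMap ℚ_[p] K) :=
          AddMonoidHomClass.isometry_of_norm _ hK
        exact continuous_const.mul (hiso.continuous.comp (continuous_subtype_val.comp (mahler n).continuous))
      · exact summable_geometric_of_lt_one (norm_nonneg lam) hl
      · intro n x
        rw [norm_mul, norm_pow]
        exact mul_le_of_le_one_right (by positivity) (mahlerK_norm_le hK n x)
    · intro x
      have hs1 := summable_mahler_series hK hl (x + 1)
      have hs2 := summable_mahler_series hK hl x
      rw [← hs1.tsum_sub hs2, (hs1.sub hs2).tsum_eq_zero_add]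
      have h0 : lam ^ 0 * mahlerK p K 0 (x + 1) - lam ^ 0 * mahlerK p K 0 x = 0 := by
        rw [mahlerK_zero, mahlerK_zero, sub_self]
      rw [h0, zero_add]
      have hcongr : ∀ n : ℕ,
          lam ^ (n + 1) * mahlerK p K (n + 1) (x + 1) - lam ^ (n + 1) * mahlerK p K (n + 1) x
            = lam * (lam ^ n * mahlerK p K n x) := by
        intro n
        rw [← mul_sub, mahlerK_succ_diff, pow_succ, mul_comm (lam ^ n) lam, mul_assoc]
      rw [tsum_congr hcongr, tsum_mul_left]
  · intro lam φ hφ heig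
    set μ := 1 + lam with hμdef
    have hstep : ∀ x : ℤ_[p], φ (x + 1) = μ * φ x := by
      intro x
      linear_combination heig x
    have hn : ∀ n : ℕ, φ ((n : ℤ_[p])) = μ ^ n * φ 0 := by
      intro n
      induction n with
      | zero => simp
      | succ n ih =>
        have : ((n + 1 : ℕ) : ℤ_[p]) = (n : ℤ_[p]) + 1 := by push_cast; ring
        rw [this, hstep, ih, pow_succ]
        ring
    have hφ0 : φ 0 ≠ 0 := by
      intro h0
      apply hφ
      have hall : ∀ n : ℕ, φ ((n : ℤ_[p])) = 0 := fun n => by rw [hn n, h0, mul_zero]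
      have : (φ : ℤ_[p] → K) = fun _ => 0 := by
        apply Continuous.ext_on PadicInt.denseRange_natCast φ.continuous continuous_const
        rintro _ ⟨n, rfl⟩
        exact hall n
      ext x
      exact congrFun this x
    have hμ : ‖μ‖ ≤ 1 := by
      by_contra hgt
      push_neg at hgt
      obtain ⟨n, hnn⟩ := pow_unbounded_of_one_lt (‖φ‖ / ‖φ 0‖) hgt
      have hb : ‖φ ((n : ℤ_[p]))‖ ≤ ‖φ‖ := φ.norm_coe_le_norm _
      rw [hn n, norm_mul, norm_pow] at hb
      have : ‖φ‖ < ‖μ‖ ^ n * ‖φ 0‖ := by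
        rwa [div_lt_iff₀ (norm_pos_iff.mpr hφ0)] at hnn
      linarith
    by_contra hcon
    push_neg at hcon
    have h1 : ‖μ - 1‖ = 1 := by
      have : μ - 1 = lam := by rw [hμdef]; ring
      rw [this]
      refine le_antisymm ?_ hcon
      calc ‖lam‖ = ‖μ + (-1)‖ := by rw [hμdef]; congr 1; ring
        _ ≤ max ‖μ‖ ‖(-1 : K)‖ := IsUltrametricDist.norm_add_le_max μ (-1)
        _ ≤ 1 := by rw [norm_neg, norm_one]; exact max_le hμ le_rfl
    have hpn : ‖(p : K)‖ < 1 := by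
      have : ((p : ℚ_[p]) : ℚ_[p]) = (p : ℚ_[p]) := rfl
      have h := hK (p : ℚ_[p])
      rw [map_natCast] at h
      rw [h]
      exact Padic.norm_p_lt_one
    have hp : p.Prime := Fact.out
    -- all iterates stay at distance 1 from 1
    have hiter : ∀ k : ℕ, ‖μ ^ p ^ k - 1‖ = 1 ∧ ‖μ ^ p ^ k‖ ≤ 1 := by
      intro k
      induction k with
      | zero => simpa using ⟨h1, hμ⟩
      | succ k ih =>
        have hpowrw : μ ^ p ^ (k + 1) = (μ ^ p ^ k) ^ p := by
          rw [← pow_mul, pow_succ]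
        constructor
        · rw [hpowrw]
          exact norm_pow_prime_sub_one_eq hp hpn ih.1
        · rw [hpowrw, norm_pow]
          exact pow_le_one₀ (norm_nonneg _) ih.2
    -- but μ ^ p ^ k → 1
    have hz : Tendsto (fun k : ℕ => ((p ^ k : ℕ) : ℤ_[p])) atTop (𝓝 0) := by
      rw [tendsto_zero_iff_norm_tendsto_zero]
      have heq : ∀ k : ℕ, ‖((p ^ k : ℕ) : ℤ_[p])‖ = ((p : ℝ)⁻¹) ^ k := by
        intro k
        rw [Nat.cast_pow, PadicInt.norm_p_pow]
        rw [zpow_neg, ← inv_zpow, zpow_natCast]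
      simp only [heq]
      apply tendsto_pow_atTop_nhds_zero_of_lt_one (by positivity)
      rw [inv_lt_one_iff₀]
      right
      exact_mod_cast hp.one_lt
    have h2 : Tendsto (fun k : ℕ => φ ((p ^ k : ℕ) : ℤ_[p])) atTop (𝓝 (φ 0)) :=
      (φ.continuous.tendsto 0).comp hz
    have h3 : Tendsto (fun k : ℕ => μ ^ p ^ k) atTop (𝓝 1) := by
      have heq : (fun k : ℕ => μ ^ p ^ k)
          = fun k : ℕ => φ ((p ^ k : ℕ) : ℤ_[p]) * (φ 0)⁻¹ := by
        funext k
        rw [hn (p ^ k), mul_assoc, mul_inv_cancel₀ hφ0, mul_one]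
      rw [heq]
      have := h2.mul (tendsto_const_nhds (x := (φ 0)⁻¹))
      rwa [mul_inv_cancel₀ hφ0] at this
    have hev : ∀ᶠ k : ℕ in atTop, ‖μ ^ p ^ k - 1‖ < 1 := by
      have := Metric.tendsto_nhds.mp h3 1 one_pos
      filter_upwards [this] with k hk
      rwa [dist_eq_norm] at hk
    obtain ⟨k, hk⟩ := hev.exists
    rw [(hiter k).1] at hk
    exact lt_irrefl 1 hk
end

section
/- Let E be a Banach space over ℂ_p and A a bounded operator on E with ‖A‖ ≤ 1 and ‖Aⁿu‖ → 0 for every u ∈ E. Then the map W : E → c₀(E) defined by Wu = (u, Au, A²u, …) is a linear isometry with closed range Y, the subspace Y is invariant under the backward shift T_E, and A = W⁻¹ ∘ (T_E|_Y) ∘ W. -/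
open Filter Topology ZeroAtInfty

/-- The backward shift `T_E (x₀,x₁,…) = (x₁,x₂,…)` on `c₀(E)`. -/
noncomputable def bshiftE {E : Type*} [NormedAddCommGroup E] (x : C₀(ℕ, E)) :
    C₀(ℕ, E) where
  toFun := fun n => x (n + 1)
  continuous_toFun := continuous_of_discreteTopology
  zero_at_infty' := by
    rw [cocompact_eq_atTop (α := ℕ)]
    refine (tendsto_add_atTop_iff_nat 1).mpr ?_
    have h := x.zero_at_infty'
    rw [cocompact_eq_atTop (α := ℕ)] at h
    exact h

/-- universality of the backward shift: Let `E` be a Banach space over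
`ℂ_p` and `A` a contraction on `E` with `‖Aⁿu‖ → 0` for every `u`. Then
`W u = (u, Au, A²u, …)` is a linear isometry of `E` onto a closed subspace
`Y = range W` of `c₀(E)` which is invariant under the backward shift `T_E`, and
`A = W⁻¹ ∘ (T_E|_Y) ∘ W`, i.e. `T_E (W u) = W (A u)` for all `u`. -/
theorem backward_shift_universal
    (p : ℕ) [Fact p.Prime] (K : Type*) [NontriviallyNormedField K]
    [IsAlgClosed K] [CompleteSpace K] [IsUltrametricDist K] [Algebra ℚ_[p] K]
    (hK : ∀ q : ℚ_[p], ‖algebraMap ℚ_[p] K q‖ = ‖q‖)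
    (E : Type*) [NormedAddCommGroup E] [NormedSpace K E] [CompleteSpace E]
    (A : E →L[K] E) (hA : ‖A‖ ≤ 1)
    (horbit : ∀ u : E, Tendsto (fun n : ℕ => ‖(A ^ n) u‖) atTop (𝓝 0)) :
    ∃ W : E →ₗᵢ[K] C₀(ℕ, E),
      (∀ u : E, ∀ n : ℕ, W u n = (A ^ n) u) ∧
      IsClosed (Set.range fun u : E => W u) ∧
      (∀ y ∈ Set.range fun u : E => W u,
        bshiftE y ∈ Set.range fun u : E => W u) ∧
      (∀ u : E, bshiftE (W u) = W (A u)) := by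
  classical
  -- the underlying map
  have hle : ∀ u : E, ∀ n : ℕ, ‖(A ^ n) u‖ ≤ ‖u‖ := by
    intro u n
    rcases Nat.eq_zero_or_pos n with rfl | hn
    · simp
    calc ‖(A ^ n) u‖ ≤ ‖A ^ n‖ * ‖u‖ := (A ^ n).le_opNorm u
    _ ≤ 1 * ‖u‖ := by
        gcongr
        calc ‖A ^ n‖ ≤ ‖A‖ ^ n := norm_pow_le' A hn
        _ ≤ 1 ^ n := pow_le_pow_left₀ (norm_nonneg A) hA n
        _ = 1 := one_pow n
    _ = ‖u‖ := one_mul _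
  set f : E → C₀(ℕ, E) := fun u =>
    { toFun := fun n => (A ^ n) u
      continuous_toFun := continuous_of_discreteTopology
      zero_at_infty' := by
        rw [cocompact_eq_atTop (α := ℕ)]
        exact tendsto_zero_iff_norm_tendsto_zero.2 (horbit u) } with hf
  have hfapp : ∀ u n, f u n = (A ^ n) u := fun u n => rfl
  have hnorm : ∀ u : E, ‖f u‖ = ‖u‖ := by
    intro u
    refine le_antisymm ?_ ?_
    · rw [← ZeroAtInftyContinuousMap.norm_toBCF_eq_norm]
      refine BoundedContinuousFunction.norm_le (norm_nonneg u) |>.2 ?_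
      intro n
      exact hle u n
    · rw [← ZeroAtInftyContinuousMap.norm_toBCF_eq_norm]
      have := BoundedContinuousFunction.norm_coe_le_norm (f u).toBCF 0
      simpa [hfapp] using this
  set W : E →ₗᵢ[K] C₀(ℕ, E) :=
    { toFun := f
      map_add' := by intro x y; ext n; simp [hfapp]
      map_smul' := by intro c x; ext n; simp [hfapp]
      norm_map' := hnorm } with hW
  have hWapp : ∀ u n, W u n = (A ^ n) u := fun u n => rfl
  have hshift : ∀ u : E, bshiftE (W u) = W (A u) := by
    intro u
    ext n
    show (A ^ (n + 1)) u = (A ^ n) (A u)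
    rw [pow_succ]
    rfl
  refine ⟨W, hWapp, ?_, ?_, hshift⟩
  · exact W.isometry.isClosedEmbedding.isClosed_range
  · rintro y ⟨u, rfl⟩
    exact ⟨A u, (hshift u).symm⟩
end
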